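/- Let G be a finite p-group with C_G(Φ(G)) ≤ Φ(G), and let H₁ = Ω₁(H) where H is the preimage of Ω₁(ζ₂(G)/ζ₁(G)). Then the ring D₁ = Der(G, H₁) satisfies D₁³ = 0; consequently Aut_{H₁}(G) is nilpotent of class at most 2. -/

import Mathlib

/-- A derivation from `G` into a set `S ⊆ G` (for the conjugation action). -/
def IsDerivationInto {G : Type*} [Group G] (S : Set G) (δ : G → G) : Prop :=
  (∀ x, δ x ∈ S) ∧ ∀ x y : G, δ (x * y) = y⁻¹ * δ x * y * δ y

open scoped commutatorElement

namespace DerH1Aux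

open Subgroup

variable {G : Type*} [Group G] {p : ℕ}

def H1s (G : Type*) [Group G] (p : ℕ) : Set G :=
  {h : G | h ∈ Subgroup.upperCentralSeries G 2 ∧ h ^ p = 1}

lemma zc {z : G} (hz : z ∈ Subgroup.center G) (g : G) : g * z * g⁻¹ = z := by
  rw [Subgroup.mem_center_iff] at hz; rw [hz g]; group

lemma zs {z : G} (hz : z ∈ Subgroup.center G) (g : G) : g * z = z * g :=
  Subgroup.mem_center_iff.mp hz g

lemma conj_pow_eq (x h : G) (n : ℕ) : (x⁻¹ * h * x) ^ n = x⁻¹ * h ^ n * x := by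
  have := (MulAut.conj x⁻¹).toMonoidHom.map_pow h n
  simpa [MulAut.conj_apply, mul_assoc] using this.symm

lemma conj_pow_eq' (g y : G) (n : ℕ) : (g * y * g⁻¹) ^ n = g * y ^ n * g⁻¹ := by
  simpa using conj_pow_eq g⁻¹ y n

lemma zc' {z : G} (hz : z ∈ Subgroup.center G) (g : G) : g⁻¹ * z * g = z := by
  have := zc hz g⁻¹; simpa using this

lemma commZ {h : G} (hh : h ∈ Subgroup.upperCentralSeries G 2) (x : G) :
    h⁻¹ * x⁻¹ * h * x ∈ Subgroup.center G := by
  have := Subgroup.mem_upperCentralSeries_succ_iff.mp ((Subgroup.upperCentralSeries G 2).inv_mem hh) x⁻¹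
  rw [Subgroup.upperCentralSeries_one] at this
  simpa [commutatorElement_def] using this

lemma commZ_pow {h : G} (hh : h ∈ Subgroup.upperCentralSeries G 2) (hp1 : h ^ p = 1) (x : G) :
    (h⁻¹ * x⁻¹ * h * x) ^ p = 1 := by
  set z := h⁻¹ * x⁻¹ * h * x with hzdef
  have hz := commZ hh x
  have hcomm : Commute h z := zs hz h
  have key : (1 : G) = h ^ p * z ^ p := by
    calc (1:G) = x⁻¹ * h ^ p * x := by rw [hp1]; group
      _ = (x⁻¹ * h * x) ^ p := (conj_pow_eq x h p).symm
      _ = (h * z) ^ p := by rw [show x⁻¹ * h * x = h * z by rw [hzdef]; group]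
      _ = h ^ p * z ^ p := hcomm.mul_pow p
  rw [hp1, one_mul] at key
  exact key.symm

variable {G : Type*} [Group G] {p : ℕ}

/-- central elements of order dividing p -/
def OmZ (G : Type*) [Group G] (p : ℕ) : Subgroup G where
  carrier := {g : G | g ∈ Subgroup.center G ∧ g ^ p = 1}
  one_mem' := ⟨Subgroup.one_mem _, one_pow p⟩
  mul_mem' := by
    rintro a b ⟨ha, ha1⟩ ⟨hb, hb1⟩
    refine ⟨Subgroup.mul_mem _ ha hb, ?_⟩
    have hc : Commute a b := zs hb a
    rw [hc.mul_pow, ha1, hb1, one_mul]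
  inv_mem' := by
    rintro a ⟨ha, ha1⟩
    exact ⟨Subgroup.inv_mem _ ha, by rw [inv_pow, ha1, inv_one]⟩


def Wgen (G : Type*) [Group G] (p : ℕ) : Set G :=
  {g : G | ∃ h x : G, h ∈ H1s G p ∧ g = h⁻¹ * x⁻¹ * h * x}

def Wsub (G : Type*) [Group G] (p : ℕ) : Subgroup G := Subgroup.closure (Wgen G p)

lemma Wsub_le_OmZ : Wsub G p ≤ OmZ G p := by
  rw [Wsub, Subgroup.closure_le]
  rintro g ⟨h, x, ⟨hh2, hhp⟩, rfl⟩
  exact ⟨commZ hh2 x, commZ_pow hh2 hhp x⟩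

lemma Wsub_central {w : G} (hw : w ∈ Wsub G p) : w ∈ Subgroup.center G :=
  (Wsub_le_OmZ hw).1

lemma mem_Wgen {h : G} (hh : h ∈ H1s G p) (x : G) : h⁻¹ * x⁻¹ * h * x ∈ Wsub G p :=
  Subgroup.subset_closure ⟨h, x, hh, rfl⟩

lemma H1s_inv {h : G} (hh : h ∈ H1s G p) : h⁻¹ ∈ H1s G p :=
  ⟨(Subgroup.upperCentralSeries G 2).inv_mem hh.1, by rw [inv_pow, hh.2, inv_one]⟩

def Sgen (G : Type*) [Group G] (p : ℕ) : Set G :=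
  {g : G | (∃ x : G, g = x ^ p) ∨ (∃ x y : G, g = x * y * x⁻¹ * y⁻¹)}

def Nsub (G : Type*) [Group G] (p : ℕ) : Subgroup G := Subgroup.closure (Sgen G p)

lemma Nsub_normal : (Nsub G p).Normal := by
  constructor
  intro n hn g
  induction hn using Subgroup.closure_induction with
  | mem x hx =>
    apply Subgroup.subset_closure
    rcases hx with ⟨y, rfl⟩ | ⟨y, z, rfl⟩
    · exact Or.inl ⟨g * y * g⁻¹, by rw [conj_pow_eq']⟩
    · refine Or.inr ⟨g * y * g⁻¹, g * z * g⁻¹, by group⟩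
  | one => simpa using (Nsub G p).one_mem
  | mul x y _ _ hx hy =>
    have : g * (x * y) * g⁻¹ = (g * x * g⁻¹) * (g * y * g⁻¹) := by group
    rw [this]; exact (Nsub G p).mul_mem hx hy
  | inv x _ hx =>
    have : g * x⁻¹ * g⁻¹ = (g * x * g⁻¹)⁻¹ := by group
    rw [this]; exact (Nsub G p).inv_mem hx


lemma frattini_le_Nsub [Finite G] (hp : p.Prime) : frattini G ≤ Nsub G p := by
  classical
  intro g hg
  by_contra hgN
  haveI : (Nsub G p).Normal := Nsub_normal
  set Q := G ⧸ Nsub G p with hQ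
  set π : G →* Q := QuotientGroup.mk' (Nsub G p) with hπ
  have hπsurj : Function.Surjective π := QuotientGroup.mk'_surjective _
  set q : Q := π g with hq
  have hq1 : q ≠ 1 := by
    rw [hq, hπ, Ne, QuotientGroup.mk'_apply, QuotientGroup.eq_one_iff]
    exact hgN
  have hQcomm : ∀ a b : Q, a * b = b * a := by
    intro a b
    obtain ⟨x, rfl⟩ := hπsurj a
    obtain ⟨y, rfl⟩ := hπsurj b
    rw [← map_mul, ← map_mul]
    rw [hπ, QuotientGroup.mk'_apply, QuotientGroup.mk'_apply, QuotientGroup.eq]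
    apply Subgroup.subset_closure
    right
    exact ⟨y⁻¹, x⁻¹, by group⟩
  have hQexp : ∀ a : Q, a ^ p = 1 := by
    intro a
    obtain ⟨x, rfl⟩ := hπsurj a
    rw [← map_pow]
    rw [hπ, QuotientGroup.mk'_apply, QuotientGroup.eq_one_iff]
    exact Subgroup.subset_closure (Or.inl ⟨x, rfl⟩)
  haveI : Finite (Subgroup Q) :=
    Finite.of_injective (fun H : Subgroup Q => (H : Set Q)) SetLike.coe_injective
  obtain ⟨P, hPq, hPmax⟩ := Set.Finite.exists_maximalFor (id) {P : Subgroup Q | q ∉ P}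
    (Set.toFinite _) ⟨⊥, by simpa using hq1⟩
  simp only [id] at hPmax
  -- any subgroup strictly above P contains q
  have habove : ∀ (H : Subgroup Q), P ≤ H → q ∉ H → P = H := fun H hPH hqH => le_antisymm hPH (hPmax hqH hPH)
  letI : CommGroup Q := { (inferInstance : Group Q) with mul_comm := hQcomm }
  -- P ⊔ zpowers q = ⊤
  have hsup : P ⊔ Subgroup.zpowers q = ⊤ := by
    rw [eq_top_iff]
    intro t _
    by_contra hts
    have htP : t ∉ P := fun h => hts (Subgroup.mem_sup_left h)
    have hqPt : q ∈ P ⊔ Subgroup.zpowers t := by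
      by_contra hq'
      have hPe : P = P ⊔ Subgroup.zpowers t := habove _ le_sup_left hq'
      exact htP (by rw [hPe]; exact Subgroup.mem_sup_right (Subgroup.mem_zpowers t))
    -- q = z * t^k
    obtain ⟨z, hz, w, hw, hzw⟩ := Subgroup.mem_sup.mp hqPt
    obtain ⟨k, rfl⟩ := Subgroup.mem_zpowers_iff.mp hw
    have htk : t ^ k ∈ P ⊔ Subgroup.zpowers q := by
      have : t ^ k = z⁻¹ * q := by rw [← hzw]; group
      rw [this]
      exact Subgroup.mul_mem _ (Subgroup.mem_sup_left (P.inv_mem hz))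
        (Subgroup.mem_sup_right (Subgroup.mem_zpowers q))
    by_cases hdvd : (p : ℤ) ∣ k
    · obtain ⟨m, rfl⟩ := hdvd
      have : t ^ ((p : ℤ) * m) = 1 := by
        rw [zpow_mul, zpow_natCast, hQexp t, one_zpow]
      rw [this, mul_one] at hzw
      exact hPq (hzw ▸ hz)
    · haveI : Fact p.Prime := ⟨hp⟩
      have hk0 : (k : ZMod p) ≠ 0 := by
        rwa [Ne, ZMod.intCast_zmod_eq_zero_iff_dvd]
      set m : ℤ := ((k : ZMod p)⁻¹.val : ℤ) with hm
      have hone : ((k * m - 1 : ℤ) : ZMod p) = 0 := by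
        push_cast [hm]
        rw [ZMod.natCast_val, ZMod.cast_id]
        rw [mul_inv_cancel₀ hk0]
        ring
      obtain ⟨c, hc⟩ := (ZMod.intCast_zmod_eq_zero_iff_dvd _ _).mp hone
      have hkm : k * m = 1 + (p : ℤ) * c := by linarith
      have ht : t = (t ^ k) ^ m := by
        rw [← zpow_mul, hkm, zpow_add, zpow_one, mul_comm (p:ℤ) c, zpow_mul,
          zpow_natCast, hQexp, mul_one]
      exact hts (ht ▸ Subgroup.zpow_mem _ htk m)
  -- lift P to a coatom of G
  set M : Subgroup G := P.comap π with hM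
  have hMmap : Subgroup.map π M = P := Subgroup.map_comap_eq_self_of_surjective hπsurj P
  have hMcoatom : IsCoatom M := by
    constructor
    · intro hMtop
      exact hPq (by rw [← hMmap, hMtop]; exact ⟨g, Subgroup.mem_top g, rfl⟩)
    · intro H hMH
      have hkerH : (Nsub G p) ≤ H := by
        calc Nsub G p = π.ker := (QuotientGroup.ker_mk' _).symm
          _ ≤ M := by rw [hM, ← MonoidHom.comap_bot]; exact Subgroup.comap_mono bot_le
          _ ≤ H := hMH.le
      have hPmapH : P ≤ Subgroup.map π H := by rw [← hMmap]; exact Subgroup.map_mono hMH.le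
      have hcomapH : (Subgroup.map π H).comap π = H := by
        rw [Subgroup.comap_map_eq, QuotientGroup.ker_mk', sup_of_le_left hkerH]
      have hne : P ≠ Subgroup.map π H := by
        intro he
        have hHM : H = M := by rw [← hcomapH, ← he]
        exact absurd (hHM ▸ hMH) (lt_irrefl M)
      have hqH : q ∈ Subgroup.map π H := by
        by_contra hq'
        exact hne (habove _ hPmapH hq')
      have hmaptop : Subgroup.map π H = ⊤ := by
        rw [eq_top_iff, ← hsup, sup_le_iff]
        exact ⟨hPmapH, by rwa [Subgroup.zpowers_le]⟩
      rw [← hcomapH, hmaptop, Subgroup.comap_top]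
  exact hPq (frattini_le_coatom hMcoatom hg)

/-- every element of ζ₂ centralizes the commutator subgroup (three subgroups lemma) -/
lemma ucs2_centralizes_commutators {h : G} (hh : h ∈ Subgroup.upperCentralSeries G 2)
    (x y : G) : Commute (x * y * x⁻¹ * y⁻¹) h := by
  have hle : ∀ (K : Subgroup G), ⁅Subgroup.upperCentralSeries G 2, K⁆ ≤ Subgroup.center G := by
    intro K
    rw [Subgroup.commutator_le]
    intro a ha b _
    have := Subgroup.mem_upperCentralSeries_succ_iff.mp ha b
    rw [Subgroup.upperCentralSeries_one] at this
    simpa [commutatorElement_def, mul_assoc] using this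
  have hZbot : ∀ (K : Subgroup G), ⁅Subgroup.center G, K⁆ = ⊥ := by
    intro K
    rw [eq_bot_iff, Subgroup.commutator_le]
    intro a ha b _
    rw [Subgroup.mem_center_iff] at ha
    simp only [Subgroup.mem_bot, commutatorElement_def]
    rw [← ha b]; group
  have h1 : ⁅⁅(⊤ : Subgroup G), Subgroup.upperCentralSeries G 2⁆, (⊤ : Subgroup G)⁆ = ⊥ := by
    rw [eq_bot_iff]
    calc ⁅⁅(⊤ : Subgroup G), Subgroup.upperCentralSeries G 2⁆, (⊤ : Subgroup G)⁆
        ≤ ⁅Subgroup.center G, (⊤ : Subgroup G)⁆ := by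
          apply Subgroup.commutator_mono _ le_rfl
          rw [Subgroup.commutator_comm]; exact hle ⊤
      _ ≤ ⊥ := (hZbot ⊤).le
  have h2 : ⁅⁅Subgroup.upperCentralSeries G 2, (⊤ : Subgroup G)⁆, (⊤ : Subgroup G)⁆ = ⊥ := by
    rw [eq_bot_iff]
    calc ⁅⁅Subgroup.upperCentralSeries G 2, (⊤ : Subgroup G)⁆, (⊤ : Subgroup G)⁆
        ≤ ⁅Subgroup.center G, (⊤ : Subgroup G)⁆ :=
          Subgroup.commutator_mono (hle ⊤) le_rfl
      _ ≤ ⊥ := (hZbot ⊤).le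
  have h3 : ⁅⁅(⊤ : Subgroup G), (⊤ : Subgroup G)⁆, Subgroup.upperCentralSeries G 2⁆ = ⊥ :=
    Subgroup.commutator_commutator_eq_bot_of_rotate h1 h2
  have hcent : ⁅(⊤ : Subgroup G), (⊤ : Subgroup G)⁆ ≤ Subgroup.centralizer
      (Subgroup.upperCentralSeries G 2 : Set G) :=
    Subgroup.commutator_eq_bot_iff_le_centralizer.mp h3
  have hmem : x * y * x⁻¹ * y⁻¹ ∈ ⁅(⊤ : Subgroup G), (⊤ : Subgroup G)⁆ := by
    have := Subgroup.commutator_mem_commutator (Subgroup.mem_top x) (Subgroup.mem_top y)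
    simpa [commutatorElement_def] using this
  have := Subgroup.mem_centralizer_iff.mp (hcent hmem) h hh
  exact this.symm

lemma h1_commute_pow {h : G} (hh : h ∈ H1s G p) (x : G) : Commute (x ^ p) h := by
  obtain ⟨hh2, hhp⟩ := hh
  -- x * h * x⁻¹ = h * z with z central of order dividing p
  set z := h⁻¹ * x * h * x⁻¹ with hzdef
  have hz : z ∈ Subgroup.center G := by
    have := commZ hh2 x⁻¹; simpa [hzdef] using this
  have hzp : z ^ p = 1 := by
    have := commZ_pow hh2 hhp x⁻¹; simpa [hzdef] using this
  have hstep : x * h = h * z * x := by rw [hzdef]; group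
  have key : ∀ n : ℕ, x ^ n * h = h * z ^ n * x ^ n := by
    intro n
    induction n with
    | zero => simp
    | succ n ih =>
      calc x ^ (n + 1) * h = x ^ n * (x * h) := by rw [pow_succ]; group
        _ = x ^ n * h * (z * x) := by rw [hstep]; group
        _ = h * z ^ n * x ^ n * (z * x) := by rw [ih]
        _ = h * z ^ n * (x ^ n * z) * x := by group
        _ = h * z ^ n * (z * x ^ n) * x := by rw [zs hz (x ^ n)]
        _ = h * z ^ (n + 1) * x ^ (n + 1) := by rw [pow_succ, pow_succ]; group
  have := key p
  rw [hzp, mul_one] at this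
  exact this

lemma h1_mem_centralizer [Finite G] (hp : p.Prime) {h : G} (hh : h ∈ H1s G p) :
    h ∈ Subgroup.centralizer (frattini G : Set G) := by
  have hN : Nsub G p ≤ Subgroup.centralizer ({h} : Set G) := by
    rw [Nsub, Subgroup.closure_le]
    rintro g (⟨x, rfl⟩ | ⟨x, y, rfl⟩)
    · rw [SetLike.mem_coe, Subgroup.mem_centralizer_iff]
      intro m hm
      rw [Set.mem_singleton_iff] at hm
      subst hm
      exact (h1_commute_pow hh x).symm
    · rw [SetLike.mem_coe, Subgroup.mem_centralizer_iff]
      intro m hm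
      rw [Set.mem_singleton_iff] at hm
      subst hm
      exact (ucs2_centralizes_commutators hh.1 x y).symm
  rw [Subgroup.mem_centralizer_iff]
  intro g hg
  have : g ∈ Subgroup.centralizer ({h} : Set G) := hN (frattini_le_Nsub hp hg)
  exact (Subgroup.mem_centralizer_iff.mp this h rfl).symm

lemma h1_mem_frattini [Finite G] (hp : p.Prime)
    (hc : Subgroup.centralizer (frattini G : Set G) ≤ frattini G)
    {h : G} (hh : h ∈ H1s G p) : h ∈ frattini G :=
  hc (h1_mem_centralizer hp hh)

lemma h1_comm [Finite G] (hp : p.Prime)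
    (hc : Subgroup.centralizer (frattini G : Set G) ≤ frattini G)
    {a b : G} (ha : a ∈ H1s G p) (hb : b ∈ H1s G p) : a * b = b * a :=
  (Subgroup.mem_centralizer_iff.mp (h1_mem_centralizer hp ha)
    b (h1_mem_frattini hp hc hb)).symm

section Derivation

/-- local copy of the derivation property -/
def IsDer (p : ℕ) (δ : G → G) : Prop :=
  (∀ x, δ x ∈ H1s G p) ∧ ∀ x y : G, δ (x * y) = y⁻¹ * δ x * y * δ y

variable {δ : G → G} (hδ : IsDer p δ)

include hδ

lemma d_one : δ 1 = 1 := by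
  have := hδ.2 1 1
  simp only [mul_one, one_mul, inv_one] at this
  have : δ 1 * δ 1 = δ 1 * 1 := by rw [mul_one, ← this]
  exact mul_left_cancel this

lemma d_inv (x : G) : δ x⁻¹ = x * (δ x)⁻¹ * x⁻¹ := by
  have h := hδ.2 x x⁻¹
  rw [mul_inv_cancel, d_one hδ] at h
  have : x * (δ x)⁻¹ * x⁻¹ * ((x⁻¹)⁻¹ * δ x * x⁻¹ * δ x⁻¹) = x * (δ x)⁻¹ * x⁻¹ * 1 := by
    rw [← h]
  rw [mul_one] at this
  rw [← this]; group

lemma d_pow (x : G) : δ (x ^ p) ∈ Wsub G p := by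
  set a := δ x with ha
  have haH : a ∈ H1s G p := hδ.1 x
  set d := a⁻¹ * x⁻¹ * a * x with hd
  have hdW : d ∈ Wsub G p := mem_Wgen haH x
  have hdZ : d ∈ Subgroup.center G := Wsub_central hdW
  have key : ∀ n : ℕ, ∃ w ∈ Wsub G p, δ (x ^ n) = a ^ n * w := by
    intro n
    induction n with
    | zero => exact ⟨1, Subgroup.one_mem _, by simpa using d_one hδ⟩
    | succ n ih =>
      obtain ⟨w, hw, hw'⟩ := ih
      refine ⟨d ^ n * w, Subgroup.mul_mem _ (Subgroup.pow_mem _ hdW n) hw, ?_⟩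
      have hwZ : w ∈ Subgroup.center G := Wsub_central hw
      have hconj : x⁻¹ * a * x = a * d := by rw [hd]; group
      calc δ (x ^ (n + 1)) = δ (x ^ n * x) := by rw [pow_succ]
        _ = x⁻¹ * δ (x ^ n) * x * a := by rw [hδ.2 (x ^ n) x, ha]
        _ = x⁻¹ * (a ^ n * w) * x * a := by rw [hw']
        _ = (x⁻¹ * a * x) ^ n * (x⁻¹ * w * x) * a := by
            rw [conj_pow_eq]; group
        _ = (a * d) ^ n * w * a := by
            rw [hconj, show x⁻¹ * w * x = w by
              have := zc hwZ x⁻¹; simpa using this]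
        _ = a ^ n * d ^ n * w * a := by rw [Commute.mul_pow (zs hdZ a)]
        _ = a ^ n * d ^ n * (w * a) := by group
        _ = a ^ n * d ^ n * (a * w) := by rw [← zs hwZ a]
        _ = a ^ n * (d ^ n * a) * w := by group
        _ = a ^ n * (a * d ^ n) * w := by rw [← zs (Subgroup.pow_mem _ hdZ n) a]
        _ = a ^ (n + 1) * (d ^ n * w) := by rw [pow_succ]; group
  obtain ⟨w, hw, hw'⟩ := key p
  rw [hw', haH.2, one_mul]
  exact hw

lemma d_commutator (x y : G) : δ (x * y * x⁻¹ * y⁻¹) ∈ Wsub G p := by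
  set a := δ x with ha
  set b := δ y with hb
  have haH : a ∈ H1s G p := hδ.1 x
  have hbH : b ∈ H1s G p := hδ.1 y
  set z₁ := a⁻¹ * y⁻¹ * a * y with hz1d
  set z₂ := b⁻¹ * x⁻¹ * b * x with hz2d
  have hz1 : z₁ ∈ Wsub G p := mem_Wgen haH y
  have hz2 : z₂ ∈ Wsub G p := mem_Wgen hbH x
  have he : a * b * a⁻¹ * b⁻¹ ∈ Wsub G p := by
    have := mem_Wgen (H1s_inv haH) b⁻¹
    simpa using this
  have e1 : δ (x * y) = a * z₁ * b := by rw [hδ.2 x y, hz1d, ← ha, ← hb]; group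
  have e2 : δ (y * x) = b * z₂ * a := by rw [hδ.2 y x, hz2d, ← ha, ← hb]; group
  have e3 : δ (x * y * x⁻¹ * y⁻¹)
      = y * x * (a * z₁ * a⁻¹ * (a * b * a⁻¹ * b⁻¹) * (b * z₂⁻¹ * b⁻¹)) * (y * x)⁻¹ := by
    have hsplit : x * y * x⁻¹ * y⁻¹ = (x * y) * (y * x)⁻¹ := by group
    rw [hsplit, hδ.2 (x * y) (y * x)⁻¹, d_inv hδ (y * x), e1, e2]
    group
  rw [e3, zc (Wsub_central hz1) a, zc (Wsub_central ((Wsub G p).inv_mem hz2)) b]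
  have hm : z₁ * (a * b * a⁻¹ * b⁻¹) * z₂⁻¹ ∈ Wsub G p :=
    Subgroup.mul_mem _ (Subgroup.mul_mem _ hz1 he) ((Wsub G p).inv_mem hz2)
  rw [zc (Wsub_central hm) (y * x)]
  exact hm

lemma d_frattini [Finite G] (hp : p.Prime) {g : G} (hg : g ∈ frattini G) :
    δ g ∈ Wsub G p := by
  let K : Subgroup G :=
    { carrier := {g : G | δ g ∈ Wsub G p}
      one_mem' := by
        simp only [Set.mem_setOf_eq, d_one hδ]
        exact (Wsub G p).one_mem
      mul_mem' := by
        intro u v hu hv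
        simp only [Set.mem_setOf_eq] at hu hv ⊢
        rw [hδ.2 u v, zc' (Wsub_central hu) v]
        exact Subgroup.mul_mem _ hu hv
      inv_mem' := by
        intro u hu
        simp only [Set.mem_setOf_eq] at hu ⊢
        rw [d_inv hδ u, zc (Wsub_central ((Wsub G p).inv_mem hu)) u]
        exact (Wsub G p).inv_mem hu }
  have hNK : Nsub G p ≤ K := by
    rw [Nsub, Subgroup.closure_le]
    rintro g (⟨x, rfl⟩ | ⟨x, y, rfl⟩)
    · exact d_pow hδ x
    · exact d_commutator hδ x y
  exact hNK (frattini_le_Nsub hp hg)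

lemma d_vanish_W [Finite G] (hp : p.Prime)
    (hc : Subgroup.centralizer (frattini G : Set G) ≤ frattini G)
    {w : G} (hw : w ∈ Wsub G p) : δ w = 1 := by
  let L : Subgroup G :=
    { carrier := {g : G | δ g = 1}
      one_mem' := d_one hδ
      mul_mem' := by
        intro u v hu hv
        simp only [Set.mem_setOf_eq] at hu hv ⊢
        rw [hδ.2 u v, hu, hv]
        group
      inv_mem' := by
        intro u hu
        simp only [Set.mem_setOf_eq] at hu ⊢
        rw [d_inv hδ u, hu]
        group }
  have hWL : Wsub G p ≤ L := by
    rw [Wsub, Subgroup.closure_le]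
    rintro g ⟨h, x, hh, rfl⟩
    show δ (h⁻¹ * x⁻¹ * h * x) = 1
    set a := δ x with ha
    set b := δ h with hb
    have haH : a ∈ H1s G p := hδ.1 x
    have hbW : b ∈ Wsub G p := d_frattini hδ hp (h1_mem_frattini hp hc hh)
    have hbZ : b ∈ Subgroup.center G := Wsub_central hbW
    have hwZ : h⁻¹ * x⁻¹ * h * x ∈ Subgroup.center G := commZ hh.1 x
    have hah : a * h = h * a := h1_comm hp hc haH hh
    have e_xh : δ (x * h) = a * b := by
      rw [hδ.2 x h, ← hb, ← ha]
      rw [show h⁻¹ * a * h * b = h⁻¹ * (a * h) * b by group, hah]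
      group
    have e_hx : δ (h * x) = b * a := by
      rw [hδ.2 h x, ← hb, ← ha, zc' hbZ x]
    have e4 : δ (h⁻¹ * x⁻¹ * h * x)
        = (h * x)⁻¹ * ((x * h) * (a * b)⁻¹ * (x * h)⁻¹) * (h * x) * (b * a) := by
      rw [show h⁻¹ * x⁻¹ * h * x = (x * h)⁻¹ * (h * x) by group,
        hδ.2 (x * h)⁻¹ (h * x), d_inv hδ (x * h), e_xh, e_hx]
    rw [e4,
      show (h * x)⁻¹ * ((x * h) * (a * b)⁻¹ * (x * h)⁻¹) * (h * x) * (b * a)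
        = (h⁻¹ * x⁻¹ * h * x)⁻¹ * ((a * b)⁻¹ * (h⁻¹ * x⁻¹ * h * x) * (a * b))
          * ((a * b)⁻¹ * (b * a)) by group,
      zc' hwZ (a * b),
      show (a * b)⁻¹ * (b * a) = b⁻¹ * (a⁻¹ * b) * a by group,
      zs hbZ a⁻¹]
    group
  exact hWL hw

end Derivation

section Aut

lemma aut_apply_eq (φ : MulAut G) (g : G) : φ g = g * (g⁻¹ * φ g) := by group

lemma aut_deriv (φ : MulAut G) (hφ : ∀ x, x⁻¹ * φ x ∈ H1s G p) :
    IsDer p (fun x => x⁻¹ * φ x) := by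
  refine ⟨hφ, fun x y => ?_⟩
  simp only [map_mul]
  group

lemma aut_inv_mem (φ : MulAut G) (hφ : ∀ x, x⁻¹ * φ x ∈ H1s G p) (x : G) :
    x⁻¹ * φ⁻¹ x ∈ H1s G p := by
  have h1 : x⁻¹ * φ⁻¹ x = ((φ⁻¹ x)⁻¹ * φ (φ⁻¹ x))⁻¹ := by
    rw [show φ (φ⁻¹ x) = x by simp]
    group
  rw [h1]
  exact H1s_inv (hφ (φ⁻¹ x))

end Aut

theorem main {G : Type*} [Group G] [Finite G]
    (p : ℕ) (hp : p.Prime) (hG : IsPGroup p G)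
    (hc : Subgroup.centralizer (frattini G : Set G) ≤ frattini G) :
    (∀ δ₁ δ₂ δ₃ : G → G,
      IsDer p δ₁ → IsDer p δ₂ → IsDer p δ₃ →
      ∀ x : G, δ₃ (δ₂ (δ₁ x)) = 1) ∧
    (∀ σ τ ρ : MulAut G,
      (∀ x : G, x⁻¹ * σ x ∈ H1s G p) →
      (∀ x : G, x⁻¹ * τ x ∈ H1s G p) →
      (∀ x : G, x⁻¹ * ρ x ∈ H1s G p) →
      ⁅⁅σ, τ⁆, ρ⁆ = 1) := by
  constructor
  · intro δ₁ δ₂ δ₃ h1 h2 h3 x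
    exact d_vanish_W h3 hp hc (d_frattini h2 hp (h1_mem_frattini hp hc (h1.1 x)))
  · intro σ τ ρ hσ hτ hρ
    have hs : IsDer p (fun x => x⁻¹ * σ x) := aut_deriv σ hσ
    have ht : IsDer p (fun x => x⁻¹ * τ x) := aut_deriv τ hτ
    have hr : IsDer p (fun x => x⁻¹ * ρ x) := aut_deriv ρ hρ
    set sδ : G → G := fun x => x⁻¹ * σ x with hsδ
    set tδ : G → G := fun x => x⁻¹ * τ x with htδ
    set rδ : G → G := fun x => x⁻¹ * ρ x with hrδ
    set γ : MulAut G := ⁅σ, τ⁆ with hγ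
    set u : G → G := fun y => y⁻¹ * γ y with hu
    have happσ : ∀ g, σ g = g * sδ g := fun g => by rw [hsδ]; group
    have happτ : ∀ g, τ g = g * tδ g := fun g => by rw [htδ]; group
    have happρ : ∀ g, ρ g = g * rδ g := fun g => by rw [hrδ]; group
    have happγ : ∀ g, γ g = g * u g := fun g => by rw [hu]; group
    -- the "difference" cocycle of two group elements in the same fibre
    have hshift : ∀ x₁ b : G, tδ (x₁ * b⁻¹) =
        b * tδ x₁ * b⁻¹ * tδ b⁻¹ := by
      intro x₁ b
      rw [ht.2 x₁ b⁻¹]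
      group
    -- Step 1 : u takes values in W
    have step1 : ∀ y : G, u y ∈ Wsub G p := by
      intro y
      set x₁ := τ⁻¹ y with hx₁
      set x₂ := σ⁻¹ x₁ with hx₂
      have hτx₁ : τ x₁ = y := by rw [hx₁]; simp
      have hσx₂ : σ x₂ = x₁ := by rw [hx₂]; simp
      have hγy : γ y = x₁ * (tδ x₂ * sδ (tδ x₂)) := by
        have : γ y = σ (τ x₂) := rfl
        rw [this, happτ x₂, map_mul, happσ (tδ x₂), hσx₂]
      have hyx : y = x₁ * tδ x₁ := by rw [← hτx₁, happτ x₁]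
      have hx2e : x₂ = x₁ * (sδ x₂)⁻¹ := by
        rw [← hσx₂, happσ x₂]; group
      have e : u y = ((tδ x₁)⁻¹ * tδ x₂) * sδ (tδ x₂) := by
        rw [hu]
        show y⁻¹ * γ y = _
        rw [hγy]
        conv_lhs => rw [hyx]
        group
      have e2 : tδ x₂ = (sδ x₂) * tδ x₁ * (sδ x₂)⁻¹ * tδ ((sδ x₂)⁻¹) := by
        conv_lhs => rw [hx2e]
        exact hshift x₁ (sδ x₂)
      have hz : (tδ x₁)⁻¹ * (sδ x₂) * tδ x₁ * (sδ x₂)⁻¹ ∈ Wsub G p := by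
        have := mem_Wgen (ht.1 x₁) (sδ x₂)⁻¹
        simpa using this
      have htb : tδ ((sδ x₂)⁻¹) ∈ Wsub G p :=
        d_frattini ht hp ((frattini G).inv_mem (h1_mem_frattini hp hc (hs.1 x₂)))
      have hsW : sδ (tδ x₂) ∈ Wsub G p :=
        d_frattini hs hp (h1_mem_frattini hp hc (ht.1 x₂))
      have hleft : (tδ x₁)⁻¹ * tδ x₂ ∈ Wsub G p := by
        rw [e2,
          show (tδ x₁)⁻¹ * (sδ x₂ * tδ x₁ * (sδ x₂)⁻¹ * tδ (sδ x₂)⁻¹)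
            = ((tδ x₁)⁻¹ * sδ x₂ * tδ x₁ * (sδ x₂)⁻¹) * tδ (sδ x₂)⁻¹ by group]
        exact Subgroup.mul_mem _ hz htb
      rw [e]
      exact Subgroup.mul_mem _ hleft hsW
    -- Step 2 : u vanishes on H1s
    have step2 : ∀ h : G, h ∈ H1s G p → u h = 1 := by
      intro h hh
      set h₁ := τ⁻¹ h with hh₁
      set h₂ := σ⁻¹ h₁ with hh₂
      have hτh₁ : τ h₁ = h := by rw [hh₁]; simp
      have hσh₂ : σ h₂ = h₁ := by rw [hh₂]; simp
      have hh1e : h₁ = h * (tδ h₁)⁻¹ := by rw [← hτh₁, happτ h₁]; group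
      have hh1F : h₁ ∈ frattini G := by
        rw [hh1e]
        exact (frattini G).mul_mem (h1_mem_frattini hp hc hh)
          ((frattini G).inv_mem (h1_mem_frattini hp hc (ht.1 h₁)))
      have hh2e : h₂ = h₁ * (sδ h₂)⁻¹ := by rw [← hσh₂, happσ h₂]; group
      have hh2F : h₂ ∈ frattini G := by
        rw [hh2e]
        exact (frattini G).mul_mem hh1F
          ((frattini G).inv_mem (h1_mem_frattini hp hc (hs.1 h₂)))
      have htδh₂W : tδ h₂ ∈ Wsub G p := d_frattini ht hp hh2F
      have hsδh₂W : sδ h₂ ∈ Wsub G p := d_frattini hs hp hh2F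
      have htδh₁W : tδ h₁ ∈ Wsub G p := d_frattini ht hp hh1F
      have et : tδ h₂ = tδ h₁ := by
        have e2 : tδ h₂ = (sδ h₂) * tδ h₁ * (sδ h₂)⁻¹ * tδ ((sδ h₂)⁻¹) := by
          conv_lhs => rw [hh2e]
          exact hshift h₁ (sδ h₂)
        rw [e2, d_vanish_W ht hp hc ((Wsub G p).inv_mem hsδh₂W), mul_one,
          zc (Wsub_central htδh₁W) (sδ h₂)]
      have hγh : γ h = h := by
        have : γ h = σ (τ h₂) := rfl
        rw [this, happτ h₂, map_mul, happσ (tδ h₂), hσh₂,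
          d_vanish_W hs hp hc htδh₂W, mul_one, et, ← happτ h₁, hτh₁]
      rw [hu]
      show h⁻¹ * γ h = 1
      rw [hγh]; group
    -- Step 3 : conclude
    rw [commutatorElement_eq_one_iff_commute]
    have : γ * ρ = ρ * γ := by
      apply MulEquiv.ext
      intro x
      show γ (ρ x) = ρ (γ x)
      have hucoc : u (x * rδ x) = (rδ x)⁻¹ * u x * (rδ x) * u (rδ x) := by
        rw [hu]
        show (x * rδ x)⁻¹ * γ (x * rδ x) = _
        rw [map_mul]
        group
      calc γ (ρ x) = ρ x * u (ρ x) := happγ (ρ x)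
        _ = ρ x * u (x * rδ x) := by rw [← happρ x]
        _ = ρ x * ((rδ x)⁻¹ * u x * (rδ x) * u (rδ x)) := by rw [hucoc]
        _ = ρ x * u x := by
            rw [zc' (Wsub_central (step1 x)) (rδ x), step2 (rδ x) (hr.1 x), mul_one]
        _ = ρ (x * u x) := by
            rw [map_mul, happρ (u x), d_vanish_W hr hp hc (step1 x), mul_one]
        _ = ρ (γ x) := by rw [← happγ x]
    exact this


end DerH1Aux

/-- Let `G` be a finite `p`-group with `C_G(Φ(G)) ≤ Φ(G)` and
`H₁ = Ω₁(H) = {h ∈ ζ₂(G) : h^p = 1}` where `H` is the preimage of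
`Ω₁(ζ₂(G)/ζ₁(G))`. Then the ring `D₁ = Der(G, H₁)` satisfies `D₁³ = 0`;
consequently `Aut_{H₁}(G)` is nilpotent of class at most `2`, i.e. all its
commutators are central: `⁅⁅σ, τ⁆, ρ⁆ = 1` for all `σ, τ, ρ ∈ Aut_{H₁}(G)`. -/
theorem der_H1_cube_zero_and_aut_H1_class_two {G : Type*} [Group G] [Finite G]
    (p : ℕ) (hp : p.Prime) (hG : IsPGroup p G)
    (hc : Subgroup.centralizer (frattini G : Set G) ≤ frattini G) :
    (∀ δ₁ δ₂ δ₃ : G → G,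
      IsDerivationInto {h : G | h ∈ upperCentralSeries G 2 ∧ h ^ p = 1} δ₁ →
      IsDerivationInto {h : G | h ∈ upperCentralSeries G 2 ∧ h ^ p = 1} δ₂ →
      IsDerivationInto {h : G | h ∈ upperCentralSeries G 2 ∧ h ^ p = 1} δ₃ →
      ∀ x : G, δ₃ (δ₂ (δ₁ x)) = 1) ∧
    (∀ σ τ ρ : MulAut G,
      (∀ x : G, x⁻¹ * σ x ∈ upperCentralSeries G 2 ∧ (x⁻¹ * σ x) ^ p = 1) →
      (∀ x : G, x⁻¹ * τ x ∈ upperCentralSeries G 2 ∧ (x⁻¹ * τ x) ^ p = 1) →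
      (∀ x : G, x⁻¹ * ρ x ∈ upperCentralSeries G 2 ∧ (x⁻¹ * ρ x) ^ p = 1) →
      ⁅⁅σ, τ⁆, ρ⁆ = 1) := by
  have M := DerH1Aux.main p hp hG hc
  constructor
  · intro δ₁ δ₂ δ₃ h1 h2 h3 x
    exact M.1 δ₁ δ₂ δ₃ ⟨h1.1, h1.2⟩ ⟨h2.1, h2.2⟩ ⟨h3.1, h3.2⟩ x
  · intro σ τ ρ hσ hτ hρ
    exact M.2 σ τ ρ hσ hτ hρ
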